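/- Assume conditions (a), (b), (c). Then for every p ∈ (ℂ^×)ⁿ (all coordinates nonzero), the orbit α(ℝ^k)p = {α(a)p : a ∈ ℝ^k} is dense in ℂⁿ and is not a locally closed subset of ℂⁿ. -/

import Mathlib

/-- The orbit `α(ℝ^k)p = {α(a)p : a ∈ ℝ^k} ⊆ ℂⁿ`, where
`α(a) = diag(e^{⟨η₁,a⟩+i⟨ξ₁,a⟩}, …, e^{⟨η_n,a⟩+i⟨ξ_n,a⟩})`. -/
noncomputable def alphaOrbit {n k : ℕ} (ξ η : Fin n → Fin k → ℝ) (p : Fin n → ℂ) :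
    Set (Fin n → ℂ) :=
  {q | ∃ a : Fin k → ℝ, q = fun j =>
    Complex.exp (Complex.ofReal (∑ i, η j i * a i) +
      Complex.I * Complex.ofReal (∑ i, ξ j i * a i)) * p j}

/-- The map `Ψ(a) = (e^{i⟨ξ₁,a⟩}, …, e^{i⟨ξ_n,a⟩})`. -/
noncomputable def psiMap {n k : ℕ} (ξ : Fin n → Fin k → ℝ) (a : Fin k → ℝ) : Fin n → ℂ :=
  fun j => Complex.exp (Complex.I * Complex.ofReal (∑ i, ξ j i * a i))

/-- The subspace `{η₁,…,η_n}^⊥ = {a ∈ ℝ^k : ⟨η_j, a⟩ = 0 for all j}`. -/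
def perpSet {n k : ℕ} (η : Fin n → Fin k → ℝ) : Set (Fin k → ℝ) :=
  {a | ∀ j, ∑ i, η j i * a i = 0}

/-- The `n`-torus `𝕋ⁿ ⊆ ℂⁿ`. -/
def torusSet (n : ℕ) : Set (Fin n → ℂ) := {z | ∀ j, ‖z j‖ = 1}

open Matrix in
lemma eta_surjective {n k : ℕ} (η : Fin n → Fin k → ℝ) (hb : LinearIndependent ℝ η)
    (r : Fin n → ℝ) : ∃ b : Fin k → ℝ, ∀ j, ∑ i, η j i * b i = r j := by
  set A : Matrix (Fin n) (Fin k) ℝ := Matrix.of η with hA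
  have hker : ∀ c : Fin n → ℝ, (A * Aᵀ).mulVec c = 0 → c = 0 := by
    intro c hc
    have h1 : Aᵀ.mulVec c ⬝ᵥ Aᵀ.mulVec c = 0 := by
      have : c ⬝ᵥ (A * Aᵀ).mulVec c = 0 := by rw [hc]; simp
      rwa [← Matrix.mulVec_mulVec, Matrix.dotProduct_mulVec, ← Matrix.mulVec_transpose] at this
    have h2 : Aᵀ.mulVec c = 0 := dotProduct_self_eq_zero.mp h1
    have h3 : ∑ j, c j • η j = 0 := by
      funext i
      have := congrFun h2 i
      simpa [A, Matrix.mulVec, dotProduct, Finset.sum_apply, mul_comm] using this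
    exact funext (Fintype.linearIndependent_iff.mp hb c h3)
  have hinj : Function.Injective (A * Aᵀ).mulVec := by
    intro x y hxy
    have h0 : (A * Aᵀ).mulVec (x - y) = 0 := by
      rw [Matrix.mulVec_sub, hxy, sub_self]
    exact sub_eq_zero.mp (hker _ h0)
  have hsurj : Function.Surjective (A * Aᵀ).mulVec :=
    Matrix.mulVec_surjective_iff_isUnit.mpr (Matrix.mulVec_injective_iff_isUnit.mp hinj)
  obtain ⟨c, hc⟩ := hsurj r
  refine ⟨Aᵀ.mulVec c, fun j => ?_⟩
  have : A.mulVec (Aᵀ.mulVec c) j = r j := by rw [Matrix.mulVec_mulVec, hc]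
  simpa [A, Matrix.mulVec, dotProduct] using this

noncomputable def expo {n k : ℕ} (ξ η : Fin n → Fin k → ℝ) (j : Fin n) (a : Fin k → ℝ) : ℂ :=
  Complex.ofReal (∑ i, η j i * a i) + Complex.I * Complex.ofReal (∑ i, ξ j i * a i)

lemma expo_add {n k : ℕ} (ξ η : Fin n → Fin k → ℝ) (j : Fin n) (a b : Fin k → ℝ) :
    expo ξ η j (a + b) = expo ξ η j a + expo ξ η j b := by
  simp only [expo, Pi.add_apply, mul_add, Finset.sum_add_distrib]
  push_cast
  ring

lemma expo_neg {n k : ℕ} (ξ η : Fin n → Fin k → ℝ) (j : Fin n) (a : Fin k → ℝ) :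
    expo ξ η j (-a) = -expo ξ η j a := by
  simp only [expo, Pi.neg_apply, mul_neg, Finset.sum_neg_distrib]
  push_cast
  ring

lemma abs_exp_expo {n k : ℕ} (ξ η : Fin n → Fin k → ℝ) (j : Fin n) (a : Fin k → ℝ) :
    ‖Complex.exp (expo ξ η j a)‖ = Real.exp (∑ i, η j i * a i) := by
  simp [expo, Complex.norm_exp]

lemma mem_alphaOrbit {n k : ℕ} (ξ η : Fin n → Fin k → ℝ) (p : Fin n → ℂ) (q : Fin n → ℂ) :
    q ∈ alphaOrbit ξ η p ↔ ∃ a : Fin k → ℝ, q = fun j => Complex.exp (expo ξ η j a) * p j :=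
  Iff.rfl

lemma orbit_dense {n k : ℕ} (ξ η : Fin n → Fin k → ℝ)
    (hb : LinearIndependent ℝ η)
    (hc₂ : torusSet n ⊆ closure (psiMap ξ '' perpSet η))
    (p : Fin n → ℂ) (hp : ∀ j, p j ≠ 0) : Dense (alphaOrbit ξ η p) := by
  rw [Metric.dense_iff]
  intro x ε hε
  have hε2 : 0 < ε / 2 := by linarith
  set w : Fin n → ℂ := fun j => if x j = 0 then ((ε/2 : ℝ) : ℂ) else x j with hw
  have hw0 : ∀ j, w j ≠ 0 := by
    intro j; by_cases h : x j = 0 <;> simp [w, h, ne_of_gt hε2, ne_of_gt hε]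
  have hwx : ∀ j, dist (w j) (x j) ≤ ε/2 := by
    intro j; by_cases h : x j = 0
    · have hwj : w j = ((ε/2 : ℝ) : ℂ) := by simp [w, h]
      rw [hwj, h, Complex.dist_eq, sub_zero, Complex.norm_real, Real.norm_eq_abs, abs_of_pos hε2]
    · simp [w, h]; linarith
  set r : Fin n → ℝ := fun j => ‖w j / p j‖ with hr
  have hr0 : ∀ j, 0 < r j := by
    intro j
    simp only [r, norm_div]
    exact div_pos (norm_pos_iff.mpr (hw0 j)) (norm_pos_iff.mpr (hp j))
  obtain ⟨b, hbB⟩ := eta_surjective η hb (fun j => Real.log (r j))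
  set θ : Fin n → ℝ := fun j => ∑ i, ξ j i * b i with hθ
  set u : Fin n → ℂ :=
    fun j => (w j / p j) / (r j : ℂ) * Complex.exp (-(Complex.I * (θ j : ℂ))) with hu
  have hut : u ∈ torusSet n := by
    intro j
    simp only [u, norm_mul, norm_div, Complex.norm_exp, Complex.norm_real, Real.norm_eq_abs,
      abs_of_pos (hr0 j)]
    rw [show (-(Complex.I * (θ j : ℂ))).re = 0 by simp]
    rw [Real.exp_zero, mul_one]
    have hrj : r j = ‖w j‖ / ‖p j‖ := norm_div _ _
    rw [hrj]
    exact div_self (div_ne_zero (norm_ne_zero_iff.mpr (hw0 j))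
      (norm_ne_zero_iff.mpr (hp j)))
  set C : ℝ := 1 + ∑ j, r j * ‖p j‖ with hC
  have hCpos : 0 < C := by
    have : ∀ j ∈ Finset.univ, 0 ≤ r j * ‖p j‖ := fun j _ =>
      mul_nonneg (le_of_lt (hr0 j)) (norm_nonneg _)
    have := Finset.sum_nonneg this
    linarith
  set δ : ℝ := ε / 2 / C with hδ
  have hδpos : 0 < δ := div_pos hε2 hCpos
  obtain ⟨v, hv, hvd⟩ := Metric.mem_closure_iff.mp (hc₂ hut) δ hδpos
  obtain ⟨c, hcperp, rfl⟩ := hv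
  have hcoord : ∀ j, dist (u j) (psiMap ξ c j) < δ := by
    intro j
    exact lt_of_le_of_lt (dist_le_pi_dist u (psiMap ξ c) j) hvd
  set y : Fin n → ℂ := fun j => Complex.exp (expo ξ η j (b + c)) * p j with hy
  have hyO : y ∈ alphaOrbit ξ η p := ⟨b + c, rfl⟩
  have hexpb : ∀ j, Complex.exp (expo ξ η j b) =
      (r j : ℂ) * Complex.exp (Complex.I * (θ j : ℂ)) := by
    intro j
    rw [expo, hbB j, Complex.exp_add, ← Complex.ofReal_exp, Real.exp_log (hr0 j)]
  have hexpc : ∀ j, Complex.exp (expo ξ η j c) = psiMap ξ c j := by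
    intro j
    rw [expo, hcperp j, psiMap]
    simp
  have hkey : ∀ j, y j = (r j : ℂ) * Complex.exp (Complex.I * (θ j : ℂ)) * p j *
      psiMap ξ c j := by
    intro j
    have hyj : y j = Complex.exp (expo ξ η j (b + c)) * p j := rfl
    rw [hyj, expo_add, Complex.exp_add, hexpb, hexpc]
    ring
  have hwkey : ∀ j, w j = (r j : ℂ) * Complex.exp (Complex.I * (θ j : ℂ)) * p j * u j := by
    intro j
    have h1 : Complex.exp (Complex.I * (θ j : ℂ)) * Complex.exp (-(Complex.I * (θ j : ℂ)))
        = 1 := by rw [← Complex.exp_add, add_neg_cancel, Complex.exp_zero]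
    have hrne : ((r j : ℝ) : ℂ) ≠ 0 := Complex.ofReal_ne_zero.mpr (ne_of_gt (hr0 j))
    have huj : u j = (w j / p j) / (r j : ℂ) * Complex.exp (-(Complex.I * (θ j : ℂ))) := rfl
    rw [huj]
    calc w j = w j * 1 * 1 * 1 := by ring
      _ = w j * (Complex.exp (Complex.I * (θ j : ℂ)) * Complex.exp (-(Complex.I * (θ j : ℂ))))
          * ((r j : ℂ) / (r j : ℂ)) * (p j / p j) := by
            rw [h1, div_self hrne, div_self (hp j)]
      _ = (r j : ℂ) * Complex.exp (Complex.I * (θ j : ℂ)) * p j *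
          (w j / p j / (r j : ℂ) * Complex.exp (-(Complex.I * (θ j : ℂ)))) := by ring
  have hbound : ∀ j, dist (y j) (w j) < ε / 2 := by
    intro j
    rw [Complex.dist_eq, hkey j, hwkey j]
    have : (r j : ℂ) * Complex.exp (Complex.I * (θ j : ℂ)) * p j * psiMap ξ c j -
        (r j : ℂ) * Complex.exp (Complex.I * (θ j : ℂ)) * p j * u j =
        (r j : ℂ) * Complex.exp (Complex.I * (θ j : ℂ)) * p j * (psiMap ξ c j - u j) := by
      ring
    rw [this, norm_mul, norm_mul, norm_mul, Complex.norm_real, Real.norm_eq_abs, abs_of_pos (hr0 j),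
      Complex.norm_exp]
    rw [show (Complex.I * (θ j : ℂ)).re = 0 by simp, Real.exp_zero, mul_one]
    have h1 : ‖psiMap ξ c j - u j‖ < δ := by
      rw [← Complex.dist_eq, dist_comm]
      exact hcoord j
    have h2 : r j * ‖p j‖ < C := by
      have : r j * ‖p j‖ ≤ ∑ j', r j' * ‖p j'‖ :=
        Finset.single_le_sum (fun j' _ => mul_nonneg (le_of_lt (hr0 j'))
          (norm_nonneg _)) (Finset.mem_univ j)
      simp only [C]
      linarith
    have h3 : 0 ≤ r j * ‖p j‖ :=
      mul_nonneg (le_of_lt (hr0 j)) (norm_nonneg _)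
    calc r j * ‖p j‖ * ‖psiMap ξ c j - u j‖
        ≤ r j * ‖p j‖ * δ :=
          mul_le_mul_of_nonneg_left (le_of_lt h1) h3
      _ < C * δ := mul_lt_mul_of_pos_right h2 hδpos
      _ = ε / 2 := by rw [hδ]; field_simp
  have hyw : dist y w < ε / 2 := (dist_pi_lt_iff hε2).mpr hbound
  have hwx' : dist w x ≤ ε / 2 := (dist_pi_le_iff (le_of_lt hε2)).mpr hwx
  refine ⟨y, Metric.mem_ball.mpr ?_, hyO⟩
  calc dist y x ≤ dist y w + dist w x := dist_triangle y w x
    _ < ε / 2 + ε / 2 := by linarith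
    _ = ε := by ring

/-- Assume: (a) the `ξ_j` and `η_j` together span `ℝ^k`; (b) `η₁,…,η_n` are linearly
independent; (c) `Ψ` is injective on `{η₁,…,η_n}^⊥` and its image is dense in, and
different from, the torus `𝕋ⁿ`.  Then for every `p ∈ (ℂ^×)ⁿ` the orbit `α(ℝ^k)p` is
dense in `ℂⁿ` and is not locally closed in `ℂⁿ`. -/
theorem statement10 (n k : ℕ) (hn : 0 < n) (hk : 0 < k) (ξ η : Fin n → Fin k → ℝ)
    (ha : Submodule.span ℝ (Set.range ξ ∪ Set.range η) = ⊤)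
    (hb : LinearIndependent ℝ η)
    (hc₁ : Set.InjOn (psiMap ξ) (perpSet η))
    (hc₂ : torusSet n ⊆ closure (psiMap ξ '' perpSet η))
    (hc₃ : psiMap ξ '' perpSet η ≠ torusSet n)
    (p : Fin n → ℂ) (hp : ∀ j, p j ≠ 0) :
    Dense (alphaOrbit ξ η p) ∧ ¬ IsLocallyClosed (alphaOrbit ξ η p) := by
  have hdense := orbit_dense ξ η hb hc₂ p hp
  refine ⟨hdense, ?_⟩
  rintro ⟨U, Z, hU, hZ, hUZ⟩
  have hOZ : alphaOrbit ξ η p ⊆ Z := hUZ ▸ Set.inter_subset_right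
  have hZuniv : Z = Set.univ := by
    have h1 : closure (alphaOrbit ξ η p) ⊆ Z := closure_minimal hOZ hZ
    rw [hdense.closure_eq] at h1
    exact Set.eq_univ_of_univ_subset h1
  have hO : IsOpen (alphaOrbit ξ η p) := by
    rw [hUZ, hZuniv, Set.inter_univ]; exact hU
  have himt : psiMap ξ '' perpSet η ⊆ torusSet n := by
    rintro v ⟨a, -, rfl⟩ j
    simp [psiMap, torusSet, Complex.norm_exp]
  obtain ⟨z, hzt, hzim⟩ := Set.exists_of_ssubset (lt_of_le_of_ne himt hc₃)
  set q : Fin n → ℂ := fun j => z j * p j with hqdef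
  have hz0 : ∀ j, z j ≠ 0 := by
    intro j h
    have := hzt j
    rw [h] at this
    simp at this
  have hq0 : ∀ j, q j ≠ 0 := fun j => mul_ne_zero (hz0 j) (hp j)
  have hqO : q ∉ alphaOrbit ξ η p := by
    rintro ⟨a, hqa⟩
    have hz : ∀ j, z j = Complex.exp (expo ξ η j a) := by
      intro j
      have h1 : z j * p j = Complex.exp (expo ξ η j a) * p j := congrFun hqa j
      exact mul_right_cancel₀ (hp j) h1
    have haperp : a ∈ perpSet η := by
      intro j
      have h1 : ‖z j‖ = 1 := hzt j
      rw [hz j, abs_exp_expo] at h1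
      exact Real.exp_injective (by rw [h1, Real.exp_zero])
    apply hzim
    refine ⟨a, haperp, ?_⟩
    funext j
    rw [psiMap, hz j, expo, haperp j]
    simp
  have hqcl : q ∈ closure (alphaOrbit ξ η p) := hdense q
  obtain ⟨x, hxO, hxq⟩ := mem_closure_iff_seq_limit.mp hqcl
  choose A hA using hxO
  have hpO : p ∈ alphaOrbit ξ η p := ⟨0, by funext j; simp⟩
  have hylim : Filter.Tendsto (fun m => fun j => Complex.exp (expo ξ η j (-(A m))) * q j)
      Filter.atTop (nhds p) := by
    rw [tendsto_pi_nhds]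
    intro j
    have h1 : Filter.Tendsto (fun m => x m j) Filter.atTop (nhds (q j)) :=
      tendsto_pi_nhds.mp hxq j
    have h2 : ∀ m, x m j = Complex.exp (expo ξ η j (A m)) * p j := fun m => congrFun (hA m) j
    have h3 : Filter.Tendsto (fun m => Complex.exp (expo ξ η j (A m))) Filter.atTop
        (nhds (q j / p j)) := by
      have he : (fun m => Complex.exp (expo ξ η j (A m))) = fun m => x m j / p j := by
        funext m; rw [h2 m, mul_div_assoc, div_self (hp j), mul_one]
      rw [he]
      exact h1.div_const (p j)
    have h4 : q j / p j ≠ 0 := div_ne_zero (hq0 j) (hp j)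
    have h5 : Filter.Tendsto (fun m => Complex.exp (expo ξ η j (-(A m)))) Filter.atTop
        (nhds ((q j / p j)⁻¹)) := by
      have he : (fun m => Complex.exp (expo ξ η j (-(A m)))) =
          fun m => (Complex.exp (expo ξ η j (A m)))⁻¹ := by
        funext m; rw [expo_neg, Complex.exp_neg]
      rw [he]
      exact h3.inv₀ h4
    have h6 := h5.mul_const (q j)
    have h7 : (q j / p j)⁻¹ * q j = p j := by
      field_simp
      rw [mul_div_right_comm, div_self (hq0 j), one_mul]
    rw [h7] at h6
    exact h6
  have hev := hylim.eventually_mem (hO.mem_nhds hpO)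
  obtain ⟨m, hm⟩ := hev.exists
  obtain ⟨b, hbm⟩ := hm
  apply hqO
  refine ⟨A m + b, ?_⟩
  show q = fun j => Complex.exp (expo ξ η j (A m + b)) * p j
  funext j
  have h7 : Complex.exp (expo ξ η j (-(A m))) * q j = Complex.exp (expo ξ η j b) * p j :=
    congrFun hbm j
  rw [expo_add, Complex.exp_add]
  have h8 : Complex.exp (expo ξ η j (A m)) *
      (Complex.exp (expo ξ η j (-(A m))) * q j) = q j := by
    rw [expo_neg, Complex.exp_neg]
    field_simp
  calc q j = Complex.exp (expo ξ η j (A m)) *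
        (Complex.exp (expo ξ η j (-(A m))) * q j) := h8.symm
    _ = Complex.exp (expo ξ η j (A m)) * (Complex.exp (expo ξ η j b) * p j) := by rw [h7]
    _ = Complex.exp (expo ξ η j (A m)) * Complex.exp (expo ξ η j b) * p j := by ring
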